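/- Let N be a positive integer and let ν be a partition of N. Call a partition μ of N orthogonal if every even part of μ occurs with even multiplicity. Then the set { μ : μ is an orthogonal partition of N and μ ≤ ν in the dominance order } is nonempty and has a unique maximal element (the orthogonal collapse of ν). -/

import Mathlib

/-- A partition of `N`: a weakly decreasing list of positive integers summing to `N`. -/
def IsPartitionOf (N : ℕ) (p : List ℕ) : Prop :=
  p.Pairwise (· ≥ ·) ∧ (∀ x ∈ p, 0 < x) ∧ p.sum = N

/-- An orthogonal partition of `N`: a partition in which every even part occurs with even
multiplicity. -/
def IsOrthPartitionOf (N : ℕ) (p : List ℕ) : Prop :=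
  IsPartitionOf N p ∧ ∀ k : ℕ, Even k → Even (p.count k)

/-- The dominance order on partitions: comparison of all prefix sums. -/
def DomLE (p q : List ℕ) : Prop :=
  ∀ j : ℕ, (p.take j).sum ≤ (q.take j).sum

namespace OCaux

/-- prefix sums -/
def PS (p : List ℕ) (j : ℕ) : ℕ := (p.take j).sum

lemma domle_iff {p q : List ℕ} : DomLE p q ↔ ∀ j, PS p j ≤ PS q j := Iff.rfl

lemma ps_nil (j : ℕ) : PS [] j = 0 := by simp [PS]

lemma ps_zero (l : List ℕ) : PS l 0 = 0 := by simp [PS]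

lemma ps_append (x y : List ℕ) (j : ℕ) : PS (x ++ y) j = PS x j + PS y (j - x.length) := by
  unfold PS; rw [List.take_append, List.sum_append]

lemma ps_singleton (a j : ℕ) : PS [a] j = if j = 0 then 0 else a := by
  cases j with
  | zero => simp [PS]
  | succ n => simp [PS, List.take_succ_cons]

lemma ps_cons (a : ℕ) (l : List ℕ) (j : ℕ) :
    PS (a :: l) j = (if j = 0 then 0 else a) + PS l (j - 1) := by
  have : a :: l = [a] ++ l := rfl
  rw [this, ps_append, ps_singleton]
  simp

lemma ps_of_le {l : List ℕ} {j : ℕ} (h : l.length ≤ j) : PS l j = l.sum := by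
  unfold PS; rw [List.take_of_length_le h]

lemma ps_le_sum (l : List ℕ) (j : ℕ) : PS l j ≤ l.sum := by
  conv_rhs => rw [← List.take_append_drop j l]
  rw [List.sum_append]
  exact Nat.le_add_right _ _

lemma ps_mono (l : List ℕ) {i j : ℕ} (h : i ≤ j) : PS l i ≤ PS l j := by
  have : PS l i = PS (l.take j) i := by
    unfold PS
    rw [List.take_take, min_eq_left h]
  rw [this]
  exact ps_le_sum _ _

lemma ps_succ (l : List ℕ) {j : ℕ} (h : j < l.length) : PS l (j + 1) = PS l j + l[j] :=
  List.sum_take_succ l j h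

lemma length_le_sum : ∀ (l : List ℕ), (∀ x ∈ l, 0 < x) → l.length ≤ l.sum := by
  intro l
  induction l with
  | nil => simp
  | cons a l ih =>
    intro h
    have h1 : 0 < a := h a (by simp)
    have h2 := ih (fun x hx => h x (by simp [hx]))
    simp only [List.length_cons, List.sum_cons]
    omega

lemma sum_parity (l : List ℕ) :
    l.sum % 2 = (l.length + l.countP (fun a => a % 2 = 0)) % 2 := by
  induction l with
  | nil => rfl
  | cons a l ih =>
    simp only [List.sum_cons, List.length_cons, List.countP_cons]
    by_cases h : a % 2 = 0 <;> simp [h] <;> omega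

lemma countP_even_eq (l : List ℕ) :
    l.countP (fun a => a % 2 = 0) =
      ∑ a ∈ (l.filter (fun a => a % 2 = 0)).toFinset, l.count a := by
  rw [List.countP_eq_length_filter]
  have h1 : ∑ a ∈ (l.filter (fun a => a % 2 = 0)).toFinset,
      (l.filter (fun a => a % 2 = 0)).count a = (l.filter (fun a => a % 2 = 0)).length := by
    have := Multiset.toFinset_sum_count_eq ((l.filter (fun a => a % 2 = 0)) : Multiset ℕ)
    simpa using this
  rw [← h1]
  refine Finset.sum_congr rfl (fun a ha => ?_)
  have ha' : a ∈ l.filter (fun a => a % 2 = 0) := List.mem_toFinset.mp ha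
  exact List.count_filter (p := fun a => decide (a % 2 = 0)) (a := a) (l := l)
    ((List.mem_filter.mp ha').2)

lemma eq_of_ps_eq : ∀ (p q : List ℕ), (∀ x ∈ p, 0 < x) → (∀ x ∈ q, 0 < x) →
    (∀ j, PS p j = PS q j) → p = q := by
  intro p
  induction p with
  | nil =>
    intro q _ hq h
    cases q with
    | nil => rfl
    | cons b q' =>
      exfalso
      have := h 1
      have hb : 0 < b := hq b (by simp)
      simp [ps_nil, ps_cons] at this
      omega
  | cons a p ih =>
    intro q hp hq h
    cases q with
    | nil =>
      exfalso
      have := h 1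
      have ha : 0 < a := hp a (by simp)
      simp [ps_nil, ps_cons] at this
      omega
    | cons b q' =>
      have hab : a = b := by
        have := h 1
        simp [ps_cons] at this
        exact this
      have htail : p = q' := by
        refine ih q' (fun x hx => hp x (by simp [hx])) (fun x hx => hq x (by simp [hx])) ?_
        intro j
        have := h (j + 1)
        simp [ps_cons, hab] at this
        omega
      rw [hab, htail]

lemma sorted_take_ge {l : List ℕ} (hs : l.Pairwise (· ≥ ·)) {j : ℕ} (hj : j < l.length)
    {x : ℕ} (hx : x ∈ l.take (j + 1)) : l[j] ≤ x := by
  obtain ⟨i, hi, rfl⟩ := List.mem_iff_getElem.mp hx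
  have hi' : i < j + 1 := lt_of_lt_of_le hi (by simp [List.length_take])
  have hil : i < l.length := by
    have := (List.length_take : (l.take (j+1)).length = _)
    omega
  rw [List.getElem_take]
  have : l.get ⟨j, hj⟩ ≤ l.get ⟨i, hil⟩ := by
    haveI : Std.Refl (· ≥ · : ℕ → ℕ → Prop) := ⟨fun a => le_refl a⟩
    exact hs.rel_get_of_le (by simp only [Fin.mk_le_mk]; omega)
  simpa using this

lemma sorted_drop_le {l : List ℕ} (hs : l.Pairwise (· ≥ ·)) {j : ℕ} (hj : j < l.length)
    {x : ℕ} (hx : x ∈ l.drop j) : x ≤ l[j] := by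
  obtain ⟨i, hi, rfl⟩ := List.mem_iff_getElem.mp hx
  rw [List.getElem_drop]
  have hji : j + i < l.length := by
    have := (List.length_drop : (l.drop j).length = _)
    omega
  have : l.get ⟨j, hj⟩ ≥ l.get ⟨j + i, hji⟩ := by
    haveI : Std.Refl (· ≥ · : ℕ → ℕ → Prop) := ⟨fun a => le_refl a⟩
    exact hs.rel_get_of_le (by simp only [Fin.mk_le_mk]; omega)
  simpa using this

lemma sorted_getLast_le {l : List ℕ} (hs : l.Pairwise (· ≥ ·)) {x : ℕ} (hx : x ∈ l)
    (hne : l ≠ []) : l.getLast hne ≤ x := by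
  rw [List.getLast_eq_getElem]
  obtain ⟨i, hi, rfl⟩ := List.mem_iff_getElem.mp hx
  have : l.get ⟨l.length - 1, by omega⟩ ≤ l.get ⟨i, hi⟩ := by
    haveI : Std.Refl (· ≥ · : ℕ → ℕ → Prop) := ⟨fun a => le_refl a⟩
    exact hs.rel_get_of_le (by simp only [Fin.mk_le_mk]; omega)
  simpa using this

lemma dropWhile_lt_of_sorted {q : ℕ} : ∀ {l : List ℕ}, l.Pairwise (· ≥ ·) →
    ∀ x ∈ l.dropWhile (fun a => decide (q ≤ a)), x < q := by
  intro l
  induction l with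
  | nil => simp
  | cons a l ih =>
    intro hs x hx
    rcases List.pairwise_cons.mp hs with ⟨ha, hl⟩
    by_cases h : q ≤ a
    · rw [List.dropWhile_cons_of_pos (by simpa using h)] at hx
      exact ih hl x hx
    · rw [List.dropWhile_cons_of_neg (by simpa using h)] at hx
      rcases List.mem_cons.mp hx with rfl | hx
      · omega
      · have := ha x hx
        omega

lemma dropWhile_lt_of_sorted' {c : ℕ} : ∀ {l : List ℕ}, l.Pairwise (· ≥ ·) →
    (∀ x ∈ l, x ≤ c) → ∀ x ∈ l.dropWhile (fun a => decide (a = c)), x < c := by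
  intro l
  induction l with
  | nil => simp
  | cons a l ih =>
    intro hs hle x hx
    rcases List.pairwise_cons.mp hs with ⟨ha, hl⟩
    by_cases h : a = c
    · rw [List.dropWhile_cons_of_pos (by simpa using h)] at hx
      exact ih hl (fun y hy => hle y (by simp [hy])) x hx
    · rw [List.dropWhile_cons_of_neg (by simpa using h)] at hx
      have hac : a ≤ c := hle a (by simp)
      rcases List.mem_cons.mp hx with rfl | hx
      · omega
      · have := ha x hx
        omega

lemma key {N : ℕ} {ν : List ℕ} (hsort : ν.Pairwise (· ≥ ·)) (hνpos : ∀ x ∈ ν, 0 < x)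
    (hsum : ν.sum = N)
    {q : ℕ} (hq2 : 2 ≤ q) (hqe : q % 2 = 0)
    (hcq : ν.count q % 2 = 1)
    (hmax : ∀ a, a % 2 = 0 → q < a → ν.count a % 2 = 0)
    {A C : List ℕ} (hAC : ν = A ++ q :: C) (hCle : ∀ x ∈ C, x ≤ q - 1)
    {t : ℕ} (htA : A.length < t) (htL : t ≤ ν.length)
    (htake : ∀ x ∈ ν.take t, q - 1 ≤ x)
    {μ : List ℕ} (hμsort : μ.Pairwise (· ≥ ·)) (hμpos : ∀ x ∈ μ, 0 < x)
    (hμsum : μ.sum = N) (hμorth : ∀ k : ℕ, Even k → Even (μ.count k))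
    (hd : ∀ j, PS μ j ≤ PS ν j) :
    PS μ t < PS ν t := by
  by_contra hcon
  have heq : PS μ t = PS ν t := le_antisymm (hd t) (by omega)
  obtain ⟨s, rfl⟩ : ∃ s, t = s + 1 := ⟨t - 1, by omega⟩
  have hAC2 : ν = (A ++ [q]) ++ C := by rw [hAC]; simp
  -- μ has length at least s+1
  have hm : s + 1 ≤ μ.length := by
    by_contra hm
    push_neg at hm
    have h1 : PS μ μ.length = N := by rw [ps_of_le (le_refl _)]; exact hμsum
    have h2 : N ≤ PS ν μ.length := h1 ▸ hd μ.length
    have h3 : PS ν μ.length ≤ N := hsum ▸ ps_le_sum ν _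
    have hmlt : μ.length < ν.length := by omega
    have h4 : PS ν (μ.length + 1) = PS ν μ.length + ν[μ.length] := ps_succ ν hmlt
    have h5 : PS ν (μ.length + 1) ≤ N := hsum ▸ ps_le_sum ν _
    have h6 : 0 < ν[μ.length] := hνpos _ (List.getElem_mem hmlt)
    omega
  have hsν : s < ν.length := by omega
  have hsμ : s < μ.length := by omega
  have hlw : (μ.take (s+1)).length = s + 1 := by rw [List.length_take]; omega
  have hlv : (ν.take (s+1)).length = s + 1 := by rw [List.length_take]; omega
  have hsumwv : (μ.take (s+1)).sum = (ν.take (s+1)).sum := heq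
  -- the s-th entries
  have hνs : q - 1 ≤ ν[s] := by
    refine htake _ ?_
    have hlt : s < (ν.take (s+1)).length := by omega
    have he : (ν.take (s+1))[s] = ν[s] := List.getElem_take
    rw [← he]
    exact List.getElem_mem hlt
  have hgetμ : ν[s] ≤ μ[s] := by
    have h1 := ps_succ μ hsμ
    have h2 := ps_succ ν hsν
    have h3 := hd s
    omega
  -- entries of the prefix of μ are ≥ q - 1
  have hwge : ∀ x ∈ μ.take (s+1), q - 1 ≤ x := by
    intro x hx
    have := sorted_take_ge hμsort hsμ hx
    omega
  -- entries of the suffix of μ are ≤ q - 1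
  have hdrople : ∀ x ∈ μ.drop (s+1), x ≤ q - 1 := by
    intro x hx
    by_cases hlen : s + 1 < μ.length
    · have h1 := sorted_drop_le hμsort hlen hx
      have h2 := ps_succ μ hlen
      have h3 := hd (s+1+1)
      have h4 : PS ν (s+1+1) ≤ PS ν (s+1) + (q-1) := by
        by_cases hL : s + 1 < ν.length
        · have h5 := ps_succ ν hL
          have h6 : ν[s+1] ≤ q - 1 := by
            have hdropC : ν.drop (A.length + 1) = C := by
              have hlen1 : (A ++ [q]).length = A.length + 1 := by simp
              rw [hAC2, ← hlen1, List.drop_left]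
            have hmem : ν[s+1] ∈ C := by
              rw [← hdropC]
              have hlt2 : s + 1 - (A.length+1) < (ν.drop (A.length+1)).length := by
                rw [List.length_drop]; omega
              have he2 : (ν.drop (A.length+1))[s+1 - (A.length+1)] = ν[s+1] := by
                rw [List.getElem_drop]
                congr 1
                omega
              rw [← he2]
              exact List.getElem_mem hlt2
            exact hCle _ hmem
          omega
        · have h5 : PS ν (s+1+1) = N := by
            rw [ps_of_le (by omega)]; exact hsum
          have h5' : PS ν (s+1) = N := by
            rw [ps_of_le (by omega)]; exact hsum
          omega
      omega
    · exfalso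
      rw [List.drop_eq_nil_of_le (by omega)] at hx
      simp at hx
  -- entries of the suffix of ν are ≤ q - 1
  have hdropνle : ∀ x ∈ ν.drop (s+1), x ≤ q - 1 := by
    intro x hx
    have hsub : ν.drop (s+1) ⊆ C := by
      rw [hAC2, List.drop_append, List.drop_eq_nil_of_le (by simp; omega)]
      simp only [List.nil_append]
      exact List.drop_subset _ _
    exact hCle _ (hsub hx)
  -- counts of even parts in the prefixes
  have hcntμ : ∀ a, a % 2 = 0 → a ∈ μ.take (s+1) → μ.count a = (μ.take (s+1)).count a := by
    intro a hae haw
    have hge : q - 1 ≤ a := hwge a haw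
    have haq : q ≤ a := by omega
    have h1 : μ.count a = (μ.take (s+1)).count a + (μ.drop (s+1)).count a := by
      conv_lhs => rw [← List.take_append_drop (s+1) μ]
      rw [List.count_append]
    have hz : (μ.drop (s+1)).count a = 0 := by
      rw [List.count_eq_zero]
      intro hmem
      have := hdrople a hmem
      omega
    omega
  have hcntν : ∀ a, a % 2 = 0 → a ∈ ν.take (s+1) → ν.count a = (ν.take (s+1)).count a := by
    intro a hae haw
    have hge : q - 1 ≤ a := htake a haw
    have haq : q ≤ a := by omega
    have h1 : ν.count a = (ν.take (s+1)).count a + (ν.drop (s+1)).count a := by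
      conv_lhs => rw [← List.take_append_drop (s+1) ν]
      rw [List.count_append]
    have hz : (ν.drop (s+1)).count a = 0 := by
      rw [List.count_eq_zero]
      intro hmem
      have := hdropνle a hmem
      omega
    omega
  -- number of even entries of the μ-prefix is even
  have hwEven : ((μ.take (s+1)).countP (fun a => a % 2 = 0)) % 2 = 0 := by
    rw [countP_even_eq, ← Nat.even_iff]
    refine Finset.even_sum _ (fun a ha => ?_)
    have ha' := List.mem_toFinset.mp ha
    have hmem : a ∈ μ.take (s+1) := List.mem_of_mem_filter ha'
    have hae : a % 2 = 0 := by simpa using (List.mem_filter.mp ha').2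
    rw [← hcntμ a hae hmem]
    exact hμorth a (Nat.even_iff.mpr hae)
  -- number of even entries of the ν-prefix is odd
  have hvOdd : ((ν.take (s+1)).countP (fun a => a % 2 = 0)) % 2 = 1 := by
    rw [countP_even_eq]
    have hqv : q ∈ ν.take (s+1) := by
      rw [hAC, List.take_append]
      obtain ⟨u, hu⟩ : ∃ u, (s+1) - A.length = u + 1 := ⟨s - A.length, by omega⟩
      rw [hu, List.take_succ_cons]
      simp
    have hqT : q ∈ ((ν.take (s+1)).filter (fun a => a % 2 = 0)).toFinset := by
      rw [List.mem_toFinset, List.mem_filter]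
      exact ⟨hqv, by simpa using hqe⟩
    rw [← Finset.add_sum_erase _ _ hqT]
    have hcqv : (ν.take (s+1)).count q % 2 = 1 := by rw [← hcntν q hqe hqv]; exact hcq
    have hrest : (∑ a ∈ (((ν.take (s+1)).filter (fun a => a % 2 = 0)).toFinset).erase q,
        (ν.take (s+1)).count a) % 2 = 0 := by
      rw [← Nat.even_iff]
      refine Finset.even_sum _ (fun a ha => ?_)
      have hne := (Finset.mem_erase.mp ha).1
      have ha' := List.mem_toFinset.mp (Finset.mem_erase.mp ha).2
      have hmem : a ∈ ν.take (s+1) := List.mem_of_mem_filter ha'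
      have hae : a % 2 = 0 := by simpa using (List.mem_filter.mp ha').2
      have hge : q - 1 ≤ a := htake a hmem
      have hgt : q < a := by omega
      rw [← hcntν a hae hmem, Nat.even_iff]
      exact hmax a hae hgt
    omega
  have hp1 := sum_parity (μ.take (s+1))
  have hp2 := sum_parity (ν.take (s+1))
  rw [hlw, hsumwv] at hp1
  rw [hlv] at hp2
  omega

lemma step {N : ℕ} {ν : List ℕ} (hν : IsPartitionOf N ν)
    (hbad : ¬ ∀ k : ℕ, Even k → Even (ν.count k)) :
    ∃ ν', IsPartitionOf N ν' ∧ (∀ t, PS ν' t ≤ PS ν t) ∧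
      (∃ t, t ≤ N ∧ PS ν' t < PS ν t) ∧
      ∀ μ, IsOrthPartitionOf N μ → DomLE μ ν → DomLE μ ν' := by
  obtain ⟨hsort, hpos, hsum⟩ := hν
  push_neg at hbad
  obtain ⟨k, hke, hkc⟩ := hbad
  -- the largest even part with odd multiplicity
  set F : Finset ℕ := ν.toFinset.filter (fun a => a % 2 = 0 ∧ ν.count a % 2 = 1) with hF
  have hkF : k ∈ F := by
    rw [hF, Finset.mem_filter, List.mem_toFinset]
    have hc1 : ν.count k % 2 = 1 := by
      rw [Nat.even_iff] at hkc; omega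
    refine ⟨?_, Nat.even_iff.mp hke, hc1⟩
    rw [← List.count_pos_iff]
    omega
  have hne : F.Nonempty := ⟨k, hkF⟩
  set q := F.max' hne with hq
  have hqF : q ∈ F := F.max'_mem hne
  rw [hF, Finset.mem_filter, List.mem_toFinset] at hqF
  obtain ⟨hqν, hqe, hcq⟩ := hqF
  have hq2 : 2 ≤ q := by
    have := hpos q hqν
    omega
  have hmax : ∀ a, a % 2 = 0 → q < a → ν.count a % 2 = 0 := by
    intro a hae hqa
    by_contra hc
    have haF : a ∈ F := by
      rw [hF, Finset.mem_filter, List.mem_toFinset]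
      refine ⟨?_, hae, by omega⟩
      rw [← List.count_pos_iff]
      omega
    have := F.le_max' a haF
    omega
  -- decompose ν = A ++ q :: C
  set P := ν.takeWhile (fun a => decide (q ≤ a)) with hP
  set C := ν.dropWhile (fun a => decide (q ≤ a)) with hC
  have hPC : P ++ C = ν := List.takeWhile_append_dropWhile
  have hPmem : ∀ x ∈ P, q ≤ x := by
    intro x hx
    simpa using List.mem_takeWhile_imp hx
  have hCmem : ∀ x ∈ C, x ≤ q - 1 := by
    intro x hx
    have := dropWhile_lt_of_sorted hsort x hx
    omega
  have hqP : q ∈ P := by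
    have : q ∈ P ++ C := hPC.symm ▸ hqν
    rcases List.mem_append.mp this with h | h
    · exact h
    · exfalso; have := hCmem q h; omega
  have hPne : P ≠ [] := by
    intro h; rw [h] at hqP; simp at hqP
  have hPsorted : P.Pairwise (· ≥ ·) := List.Pairwise.sublist (List.takeWhile_sublist _) hsort
  have hlast : P.getLast hPne = q := by
    refine le_antisymm (sorted_getLast_le hPsorted hqP hPne) (hPmem _ (List.getLast_mem hPne))
  set A := P.dropLast with hA
  have hPA : A ++ [q] = P := by
    rw [hA, ← hlast]
    exact List.dropLast_append_getLast hPne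
  have hAmem : ∀ x ∈ A, q ≤ x := fun x hx => hPmem x ((List.dropLast_sublist P).subset hx)
  have hνA : ν = (A ++ [q]) ++ C := by rw [hPA, hPC]
  have hνA' : ν = A ++ q :: C := by rw [hνA]; simp
  have hAsorted : A.Pairwise (· ≥ ·) := List.Pairwise.sublist (List.dropLast_sublist P) hPsorted
  have hCsorted : C.Pairwise (· ≥ ·) := List.Pairwise.sublist (List.dropWhile_sublist _) hsort
  -- decompose C = D ++ E
  set D := C.takeWhile (fun a => decide (a = q - 1)) with hD
  set E := C.dropWhile (fun a => decide (a = q - 1)) with hE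
  have hDE : D ++ E = C := List.takeWhile_append_dropWhile
  have hDmem : ∀ x ∈ D, x = q - 1 := by
    intro x hx
    simpa using List.mem_takeWhile_imp hx
  have hEmem : ∀ x ∈ E, x ≤ q - 2 := by
    intro x hx
    have := dropWhile_lt_of_sorted' hCsorted hCmem x hx
    omega
  have hDsorted : D.Pairwise (· ≥ ·) := List.Pairwise.sublist (List.takeWhile_sublist _) hCsorted
  have hEsorted : E.Pairwise (· ≥ ·) := List.Pairwise.sublist (List.dropWhile_sublist _) hCsorted
  have hνDE : ν = (A ++ q :: D) ++ E := by
    rw [hνA', ← hDE]; simp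
  set i1 := A.length with hi1
  set j0 := i1 + 1 + D.length with hj0
  have hlν : ν.length = j0 + E.length := by
    rw [hνDE]; simp [hj0, hi1]; omega
  have hLN : ν.length ≤ N := by
    rw [← hsum]; exact length_le_sum ν hpos
  -- entries of prefixes up to j0 are ≥ q - 1
  have htake : ∀ t, t ≤ j0 → ∀ x ∈ ν.take t, q - 1 ≤ x := by
    intro t ht x hx
    have hlen : (A ++ q :: D).length = j0 := by simp [hj0, hi1]; omega
    have hlen2 : t - (A ++ q :: D).length = 0 := by
      rw [hlen]; omega
    rw [hνDE, List.take_append, hlen2] at hx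
    simp only [List.take_zero, List.append_nil] at hx
    have hx' : x ∈ A ++ q :: D := List.take_subset _ _ hx
    rcases List.mem_append.mp hx' with h | h
    · have := hAmem x h; omega
    · rcases List.mem_cons.mp h with rfl | h
      · omega
      · have := hDmem x h; omega
  -- the key strict inequality for orthogonal partitions dominated by ν
  have hkey : ∀ μ, IsOrthPartitionOf N μ → DomLE μ ν → ∀ t, i1 < t → t ≤ j0 →
      PS μ t < PS ν t := by
    intro μ hμ hdμ t ht1 ht2
    obtain ⟨⟨hμs, hμp, hμsum⟩, hμorth⟩ := hμ
    exact key hsort hpos hsum hq2 hqe hcq hmax hνA' hCmem ht1 (by omega)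
      (htake t ht2) hμs hμp hμsum hμorth hdμ
  -- construct the new partition ν′
  clear_value E
  have hmain : ∃ ν', IsPartitionOf N ν' ∧
      (∀ t, PS ν' t + (if t ≤ i1 ∨ j0 < t then 0 else 1) = PS ν t) := by
    cases E with
    | nil =>
      rw [List.append_nil] at hνDE
      refine ⟨(A ++ (q-1) :: D) ++ [1], ⟨?_, ?_, ?_⟩, ?_⟩
      · -- sorted
        rw [List.pairwise_append]
        refine ⟨?_, by simp, ?_⟩
        · rw [List.pairwise_append]
          refine ⟨hAsorted, ?_, ?_⟩
          · rw [List.pairwise_cons]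
            exact ⟨fun b hb => by have := hDmem b hb; omega, hDsorted⟩
          · intro a ha b hb
            have h1 := hAmem a ha
            rcases List.mem_cons.mp hb with rfl | hb
            · omega
            · have := hDmem b hb; omega
        · intro a ha b hb
          simp only [List.mem_singleton] at hb
          subst hb
          rcases List.mem_append.mp ha with h | h
          · have := hAmem a h; omega
          · rcases List.mem_cons.mp h with rfl | h
            · omega
            · have := hDmem a h; omega
      · -- positive
        intro x hx
        rcases List.mem_append.mp hx with h | h
        · rcases List.mem_append.mp h with h' | h'
          · exact hpos x (by rw [hνA']; exact List.mem_append_left _ h')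
          · rcases List.mem_cons.mp h' with rfl | h'
            · omega
            · have := hDmem x h'; omega
        · simp only [List.mem_singleton] at h; omega
      · -- sum
        have h1 : ν.sum = A.sum + (q + D.sum) := by rw [hνDE]; simp
        have h2 : ((A ++ (q-1) :: D) ++ [1]).sum = A.sum + (q - 1 + D.sum) + 1 := by simp; omega
        rw [h2]
        omega
      · -- prefix sums
        intro t
        have h3 : (A ++ (q-1) :: D).length = A.length + 1 + D.length := by simp; omega
        have h1 : PS ν t
            = PS A t + ((if t - A.length = 0 then 0 else q) + PS D (t - A.length - 1)) := by
          rw [hνDE, ps_append, ps_cons]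
        have h2 : PS ((A ++ (q-1) :: D) ++ [1]) t
            = (PS A t + ((if t - A.length = 0 then 0 else q - 1) + PS D (t - A.length - 1)))
              + (if t - (A.length + 1 + D.length) = 0 then 0 else 1) := by
          rw [ps_append, ps_append, ps_cons, ps_singleton, h3]
        rw [h1, h2, hj0, hi1]
        split_ifs <;> omega
    | cons e E' =>
      have he2 : e ≤ q - 2 := hEmem e (by simp)
      have hE'mem : ∀ x ∈ E', x ≤ e := (List.pairwise_cons.mp hEsorted).1
      have hE'sorted : E'.Pairwise (· ≥ ·) := (List.pairwise_cons.mp hEsorted).2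
      have hE'ν : ∀ x ∈ E', x ∈ ν := by
        intro x hx
        rw [hνDE]
        simp [hx]
      refine ⟨(A ++ (q-1) :: D) ++ (e+1) :: E', ⟨?_, ?_, ?_⟩, ?_⟩
      · -- sorted
        rw [List.pairwise_append]
        refine ⟨?_, ?_, ?_⟩
        · rw [List.pairwise_append]
          refine ⟨hAsorted, ?_, ?_⟩
          · rw [List.pairwise_cons]
            exact ⟨fun b hb => by have := hDmem b hb; omega, hDsorted⟩
          · intro a ha b hb
            have h1 := hAmem a ha
            rcases List.mem_cons.mp hb with rfl | hb
            · omega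
            · have := hDmem b hb; omega
        · rw [List.pairwise_cons]
          exact ⟨fun b hb => by have := hE'mem b hb; omega, hE'sorted⟩
        · intro a ha b hb
          have hb' : b ≤ e + 1 := by
            rcases List.mem_cons.mp hb with rfl | hb
            · omega
            · have := hE'mem b hb; omega
          rcases List.mem_append.mp ha with h | h
          · have := hAmem a h; omega
          · rcases List.mem_cons.mp h with rfl | h
            · omega
            · have := hDmem a h; omega
      · -- positive
        intro x hx
        rcases List.mem_append.mp hx with h | h
        · rcases List.mem_append.mp h with h' | h'
          · exact hpos x (by rw [hνA']; exact List.mem_append_left _ h')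
          · rcases List.mem_cons.mp h' with rfl | h'
            · omega
            · have := hDmem x h'; omega
        · rcases List.mem_cons.mp h with rfl | h
          · omega
          · exact hpos x (hE'ν x h)
      · -- sum
        have h1 : ν.sum = A.sum + (q + (D.sum + (e + E'.sum))) := by rw [hνDE]; simp
        have h2 : ((A ++ (q-1) :: D) ++ (e+1) :: E').sum
            = A.sum + (q - 1 + D.sum) + (e + 1 + E'.sum) := by simp; omega
        rw [h2]
        omega
      · -- prefix sums
        intro t
        have h3 : (A ++ q :: D).length = A.length + 1 + D.length := by simp; omega
        have h3' : (A ++ (q-1) :: D).length = A.length + 1 + D.length := by simp; omega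
        have h1 : PS ν t
            = PS A t + ((if t - A.length = 0 then 0 else q) + PS D (t - A.length - 1))
              + ((if t - (A.length + 1 + D.length) = 0 then 0 else e)
                + PS E' (t - (A.length + 1 + D.length) - 1)) := by
          rw [hνDE, ps_append, ps_append, ps_cons, ps_cons, h3]
        have h2 : PS ((A ++ (q-1) :: D) ++ (e+1) :: E') t
            = PS A t + ((if t - A.length = 0 then 0 else q - 1) + PS D (t - A.length - 1))
              + ((if t - (A.length + 1 + D.length) = 0 then 0 else e + 1)
                + PS E' (t - (A.length + 1 + D.length) - 1)) := by
          rw [ps_append, ps_append, ps_cons, ps_cons, h3']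
        rw [h1, h2, hj0, hi1]
        split_ifs <;> omega
  obtain ⟨ν', hν'p, hps⟩ := hmain
  refine ⟨ν', hν'p, ?_, ⟨i1 + 1, ?_, ?_⟩, ?_⟩
  · intro t
    have := hps t
    split_ifs at this <;> omega
  · -- i1 + 1 ≤ N
    omega
  · have := hps (i1 + 1)
    have hcond : ¬(i1 + 1 ≤ i1 ∨ j0 < i1 + 1) := by omega
    rw [if_neg hcond] at this
    omega
  · intro μ hμ hdμ
    rw [domle_iff]
    intro t
    have h1 := hps t
    by_cases hmid : i1 < t ∧ t ≤ j0
    · have h2 := hkey μ hμ hdμ t hmid.1 hmid.2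
      split_ifs at h1 <;> omega
    · have h3 := (domle_iff.mp hdμ) t
      split_ifs at h1 <;> omega

lemma domle_refl (p : List ℕ) : DomLE p p := fun _ => le_rfl

lemma domle_trans {p q r : List ℕ} (h1 : DomLE p q) (h2 : DomLE q r) : DomLE p r :=
  fun j => le_trans (h1 j) (h2 j)

lemma domle_antisymm {p q : List ℕ} (hp : ∀ x ∈ p, 0 < x) (hq : ∀ x ∈ q, 0 < x)
    (h1 : DomLE p q) (h2 : DomLE q p) : p = q :=
  eq_of_ps_eq p q hp hq (fun j => le_antisymm (h1 j) (h2 j))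

lemma greatest {N : ℕ} (hN : 0 < N) :
    ∀ n (ν : List ℕ), IsPartitionOf N ν → (∑ t ∈ Finset.range (N+1), PS ν t) ≤ n →
    ∃ μ₀, IsOrthPartitionOf N μ₀ ∧ DomLE μ₀ ν ∧
      ∀ μ, IsOrthPartitionOf N μ → DomLE μ ν → DomLE μ μ₀ := by
  intro n
  induction n with
  | zero =>
    intro ν hν hM
    exfalso
    have h1 : 1 ≤ PS ν 1 := by
      cases ν with
      | nil =>
        have := hν.2.2
        simp at this
        omega
      | cons a l =>
        have := hν.2.1 a (by simp)
        simp [ps_cons]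
        omega
    have h2 : PS ν 1 ≤ ∑ t ∈ Finset.range (N+1), PS ν t :=
      Finset.single_le_sum (fun i _ => Nat.zero_le _) (Finset.mem_range.mpr (by omega))
    omega
  | succ n ih =>
    intro ν hν hM
    by_cases horth : ∀ k : ℕ, Even k → Even (ν.count k)
    · exact ⟨ν, ⟨hν, horth⟩, domle_refl ν, fun μ _ h => h⟩
    · obtain ⟨ν', hν', hdom, ⟨t, htN, hst⟩, hall⟩ := step hν horth
      have hlt : ∑ t ∈ Finset.range (N+1), PS ν' t < ∑ t ∈ Finset.range (N+1), PS ν t :=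
        Finset.sum_lt_sum (fun i _ => hdom i) ⟨t, Finset.mem_range.mpr (by omega), hst⟩
      obtain ⟨μ₀, h1, h2, h3⟩ := ih ν' hν' (by omega)
      exact ⟨μ₀, h1, domle_trans h2 (fun j => hdom j), fun μ hμ hd => h3 μ hμ (hall μ hμ hd)⟩

end OCaux

/-- Orthogonal collapse: the set of orthogonal partitions of `N` dominated by a given
partition `ν` of `N` is nonempty and has a unique maximal element. -/
theorem orthogonal_collapse (N : ℕ) (hN : 0 < N) (ν : List ℕ) (hν : IsPartitionOf N ν) :
    (∃ μ : List ℕ, IsOrthPartitionOf N μ ∧ DomLE μ ν) ∧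
    (∃! μ₀ : List ℕ, (IsOrthPartitionOf N μ₀ ∧ DomLE μ₀ ν) ∧
      ∀ μ : List ℕ, IsOrthPartitionOf N μ → DomLE μ ν → DomLE μ₀ μ → μ = μ₀) := by
  obtain ⟨μ₀, h1, h2, h3⟩ :=
    OCaux.greatest hN (∑ t ∈ Finset.range (N+1), OCaux.PS ν t) ν hν le_rfl
  constructor
  · exact ⟨μ₀, h1, h2⟩
  · refine ⟨μ₀, ⟨⟨h1, h2⟩, ?_⟩, ?_⟩
    · intro μ hμo hμd h0μ
      exact OCaux.domle_antisymm hμo.1.2.1 h1.1.2.1 (h3 μ hμo hμd) h0μ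
    · rintro μ₁ ⟨⟨h1o, h1d⟩, h1max⟩
      exact (h1max μ₀ h1 h2 (h3 μ₁ h1o h1d)).symm
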